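/- Let g' be a k-goal function (k∈{0,1}) for a Boolean function f, and suppose f has a minimal k-certificate of size s. Then the k-goal value of g' is at least s. -/

import Mathlib

attribute [local instance] Classical.propDecidable

/-- `b'` extends the partial assignment `b`: it agrees on all non-`*` coordinates of `b`. -/
def Extends {n : ℕ} (b' b : Fin n → Option Bool) : Prop :=
  ∀ i v, b i = some v → b' i = some v

/-- A total assignment `x` extends the partial assignment `b`. -/
def TExtends {n : ℕ} (x : Fin n → Bool) (b : Fin n → Option Bool) : Prop :=
  ∀ i v, b i = some v → x i = v

/-- `b` is a certificate of `f`: `f` is constant on all total extensions of `b`. -/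
def IsCert {n : ℕ} (f : (Fin n → Bool) → Bool) (b : Fin n → Option Bool) : Prop :=
  ∀ x y, TExtends x b → TExtends y b → f x = f y

/-- `b` is a `k`-certificate of `f`: it forces `f` to the value `k`. -/
def IsKCert {n : ℕ} (f : (Fin n → Bool) → Bool) (k : Bool) (b : Fin n → Option Bool) : Prop :=
  ∀ x, TExtends x b → f x = k

/-- A certificate is minimal if no proper restriction of it is a certificate. -/
def MinCert {n : ℕ} (f : (Fin n → Bool) → Bool) (c : Fin n → Option Bool) : Prop :=
  IsCert f c ∧ ∀ c', Extends c c' → c' ≠ c → ¬ IsCert f c'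

/-- A `k`-certificate is minimal if no proper restriction of it is a `k`-certificate. -/
def MinKCert {n : ℕ} (f : (Fin n → Bool) → Bool) (k : Bool) (c : Fin n → Option Bool) : Prop :=
  IsKCert f k c ∧ ∀ c', Extends c c' → c' ≠ c → ¬ IsKCert f k c'

/-- Monotone utility function: filling in `*`'s never decreases the value. -/
def Mono {n : ℕ} (g : (Fin n → Option Bool) → ℕ) : Prop :=
  ∀ b b', Extends b' b → g b ≤ g b'

/-- Submodular utility function: marginal gains shrink under extension. -/
def Submod {n : ℕ} (g : (Fin n → Option Bool) → ℕ) : Prop :=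
  ∀ b b' (i : Fin n) (ℓ : Bool), Extends b' b → b i = none → b' i = none →
    g (Function.update b' i (some ℓ)) + g b ≤ g (Function.update b i (some ℓ)) + g b'

/-- `g` is a goal function for `f` with goal value `Q`. -/
def GoalFn {n : ℕ} (f : (Fin n → Bool) → Bool) (g : (Fin n → Option Bool) → ℕ)
    (Q : ℕ) : Prop :=
  Mono g ∧ Submod g ∧ ∀ b, g b = Q ↔ IsCert f b

/-- `g` is a `k`-goal function for `f` with goal value `Q`. -/
def KGoalFn {n : ℕ} (f : (Fin n → Bool) → Bool) (k : Bool)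
    (g : (Fin n → Option Bool) → ℕ) (Q : ℕ) : Prop :=
  Mono g ∧ Submod g ∧ (∀ b, IsKCert f k b → g b = Q) ∧ (∀ b, ¬ IsKCert f k b → g b < Q)

/-- The goal value `Γ(f)`: the minimum goal value of any goal function for `f`. -/
noncomputable def gamma {n : ℕ} (f : (Fin n → Bool) → Bool) : ℕ :=
  sInf {Q | ∃ g, GoalFn f g Q}

/-- The `k`-goal value `Γ^k(f)`. -/
noncomputable def gammaK {n : ℕ} (f : (Fin n → Bool) → Bool) (k : Bool) : ℕ :=
  sInf {Q | ∃ g, KGoalFn f k g Q}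

/-- The weight of a partial assignment: the number of non-`*` coordinates. -/
noncomputable def wt {n : ℕ} (b : Fin n → Option Bool) : ℕ :=
  (Finset.univ.filter (fun i => (b i).isSome)).card

/-- `f` depends on its `i`-th variable. -/
def BoolDependsOn {n : ℕ} (f : (Fin n → Bool) → Bool) (i : Fin n) : Prop :=
  ∃ x, f (Function.update x i true) ≠ f (Function.update x i false)

/-- if `f` has a minimal `k`-certificate of size `s`, then the goal value of
any `k`-goal function for `f` is at least `s`. -/
theorem stmt3 {n : ℕ} (f : (Fin n → Bool) → Bool) (k : Bool)
    (g' : (Fin n → Option Bool) → ℕ) (Q : ℕ) (hg : KGoalFn f k g' Q)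
    (c : Fin n → Option Bool) (hc : MinKCert f k c) (s : ℕ) (hs : wt c = s) :
    s ≤ Q := by
  classical
  obtain ⟨hmono, hsub, hcert, hnot⟩ := hg
  obtain ⟨hkc, hmin⟩ := hc
  set S : Finset (Fin n) := Finset.univ.filter (fun i => (c i).isSome) with hS
  -- restriction of c to a finset T
  set r : Finset (Fin n) → (Fin n → Option Bool) :=
    fun T i => if i ∈ T then c i else none with hr
  have key : ∀ T : Finset (Fin n), T ⊆ S → T.card ≤ g' (r T) := by
    intro T
    induction T using Finset.induction_on with
    | empty => intro _; simp
    | @insert a T' ha ih =>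
      intro hsub'
      have hT'S : T' ⊆ S := fun i hi => hsub' (Finset.mem_insert_of_mem hi)
      have haS : a ∈ S := hsub' (Finset.mem_insert_self a T')
      obtain ⟨ℓ, hℓ⟩ : ∃ ℓ, c a = some ℓ := by
        have := (Finset.mem_filter.mp haS).2
        exact Option.isSome_iff_exists.mp this
      -- b = r T', b' = c with a removed
      set b : Fin n → Option Bool := r T' with hb
      set b' : Fin n → Option Bool := fun i => if i = a then none else c i with hb'
      have hext : Extends b' b := by
        intro i v hiv
        simp only [hb, hr] at hiv
        by_cases hiT : i ∈ T'
        · simp only [hiT, if_pos] at hiv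
          have hia : i ≠ a := fun h => ha (h ▸ hiT)
          simp [hb', hia, hiv]
        · simp [hiT] at hiv
      have hba : b a = none := by simp [hb, hr, ha]
      have hb'a : b' a = none := by simp [hb']
      have hsubm := hsub b b' a ℓ hext hba hb'a
      have e1 : Function.update b' a (some ℓ) = c := by
        funext i
        by_cases hia : i = a
        · subst hia; simp [hℓ]
        · simp [Function.update, hia, hb']
      have e2 : Function.update b a (some ℓ) = r (insert a T') := by
        funext i
        by_cases hia : i = a
        · subst hia; simp [hr, hℓ]
        · simp [Function.update, hia, hb, hr, Finset.mem_insert]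
      rw [e1, e2] at hsubm
      have hgc : g' c = Q := hcert c hkc
      have hb'lt : g' b' < Q := by
        apply hnot
        apply hmin b'
        · intro i v hiv
          simp only [hb'] at hiv
          by_cases hia : i = a
          · simp [hia] at hiv
          · simpa [hia] using hiv
        · intro h
          have := congrFun h a
          simp [hb', hℓ] at this
      have hih := ih hT'S
      have hcard : (insert a T').card = T'.card + 1 := Finset.card_insert_of_notMem ha
      omega
  have hrS : r S = c := by
    funext i
    by_cases hi : i ∈ S
    · simp [hr, hi]
    · have : c i = none := by
        by_contra h
        exact hi (Finset.mem_filter.mpr ⟨Finset.mem_univ i, Option.isSome_iff_ne_none.mpr h⟩)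
      simp [hr, hi, this]
  have h1 : S.card ≤ g' c := by rw [← hrS]; exact key S (le_refl S)
  have h2 : g' c = Q := hcert c hkc
  have h3 : S.card = s := by rw [← hs]; rfl
  omega
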